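/- Let C be a small category and L : C ⥤ D a localization of C at the class of all its morphisms. Then L is both an initial functor and a final functor. -/

import Mathlib

open CategoryTheory

universe u v w

namespace LocTopAux

open CategoryTheory.Localization CategoryTheory.Localization.Construction

variable {C : Type u} [SmallCategory C] {W : MorphismProperty C}

/-- Auxiliary object of the structured arrow category. -/
noncomputable def toObj {d X : W.Localization} (g : d ⟶ X) : StructuredArrow d W.Q :=
  StructuredArrow.mk (Y := (objEquiv W).symm X)
    (g ≫ eqToHom (((objEquiv W).right_inv X).symm))

lemma zigzag_toObj {d : W.Localization} {X Y : W.Localization} (φ : X ⟶ Y) (g : d ⟶ X) :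
    Zigzag (toObj g) (toObj (g ≫ φ)) := by
  let P : MorphismProperty W.Localization := fun X Y φ =>
    ∀ (g : d ⟶ X), Zigzag (toObj g) (toObj (g ≫ φ))
  have hc : P.IsStableUnderComposition := by
    constructor
    intro X Y Z φ₁ φ₂ h₁ h₂ g
    refine (h₁ g).trans ?_
    rw [← Category.assoc]
    exact h₂ (g ≫ φ₁)
  have h₁ : ∀ ⦃c₁ c₂ : C⦄ (f : c₁ ⟶ c₂), P (W.Q.map f) := by
    intro c₁ c₂ f g
    refine Relation.ReflTransGen.single (Or.inl ⟨?_⟩)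
    exact StructuredArrow.homMk f (by simp [toObj]; rfl)
  have h₂ : ∀ ⦃c₁ c₂ : C⦄ (w : c₁ ⟶ c₂) (hw : W w), P (wInv w hw) := by
    intro c₁ c₂ w hw g
    refine Relation.ReflTransGen.single (Or.inr ⟨?_⟩)
    refine StructuredArrow.homMk w ?_
    have : (g ≫ wInv w hw) ≫ W.Q.map w = g := by
      have h := (wIso w hw).inv_hom_id
      dsimp [wIso] at h
      rw [Category.assoc]
      change g ≫ wInv w hw ≫ W.Q.map w = g
      rw [show wInv w hw ≫ W.Q.map w = 𝟙 _ from h, Category.comp_id]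
    simp [toObj, this]
    erw [eqToHom_refl, eqToHom_refl, Category.id_comp, Category.comp_id]
    exact (Category.assoc _ _ _).symm.trans this
  have := morphismProperty_eq_top P h₁ h₂
  have : P φ := by rw [this]; trivial
  exact this g

lemma isGroupoid {X Y : (⊤ : MorphismProperty C).Localization} (φ : X ⟶ Y) : IsIso φ := by
  let P : MorphismProperty (⊤ : MorphismProperty C).Localization :=
    MorphismProperty.isomorphisms _
  have h₁ : ∀ ⦃c₁ c₂ : C⦄ (f : c₁ ⟶ c₂), P ((⊤ : MorphismProperty C).Q.map f) := fun _ _ f =>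
    Localization.inverts (⊤ : MorphismProperty C).Q ⊤ f trivial
  have h₂ : ∀ ⦃c₁ c₂ : C⦄ (w : c₁ ⟶ c₂) (hw : (⊤ : MorphismProperty C) w),
      P (wInv w hw) := by
    intro c₁ c₂ w hw
    show IsIso (wInv w hw)
    exact (inferInstance : IsIso (wIso w hw).inv)
  have := morphismProperty_eq_top P h₁ h₂
  have : P φ := by rw [this]; trivial
  exact this

lemma final_Q : (⊤ : MorphismProperty C).Q.Final := by
  constructor
  intro d
  have : Nonempty (StructuredArrow d (⊤ : MorphismProperty C).Q) :=
    ⟨StructuredArrow.mk (eqToHom (((objEquiv (⊤ : MorphismProperty C)).right_inv d).symm))⟩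
  apply zigzag_isConnected
  intro j₁ j₂
  have e₁ : Zigzag j₁ (toObj j₁.hom) := by
    refine Relation.ReflTransGen.single (Or.inl ⟨?_⟩)
    exact StructuredArrow.homMk (𝟙 _) (by simp [toObj]; erw [CategoryTheory.Functor.map_id]; rfl)
  have e₂ : Zigzag j₂ (toObj j₂.hom) := by
    refine Relation.ReflTransGen.single (Or.inl ⟨?_⟩)
    exact StructuredArrow.homMk (𝟙 _) (by simp [toObj]; erw [CategoryTheory.Functor.map_id]; rfl)
  have : IsIso j₁.hom := isGroupoid _
  have key := zigzag_toObj (inv j₁.hom ≫ j₂.hom) j₁.hom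
  rw [IsIso.hom_inv_id_assoc] at key
  exact e₁.trans (key.trans e₂.symm)

lemma final_of_isLocalization_top {D : Type v} [Category.{w} D] (L : C ⥤ D)
    [L.IsLocalization (⊤ : MorphismProperty C)] : L.Final := by
  have h₁ : (⊤ : MorphismProperty C).Q.Final := final_Q
  have h₂ : ((⊤ : MorphismProperty C).Q ⋙
      (Localization.equivalenceFromModel L ⊤).functor).Final :=
    Functor.final_comp_equivalence _ _
  exact Functor.final_of_natIso (Localization.qCompEquivalenceFromModelFunctorIso L ⊤)

lemma top_op : (⊤ : MorphismProperty C).op = (⊤ : MorphismProperty Cᵒᵖ) := by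
  ext
  simp [MorphismProperty.op]

end LocTopAux

/-- If `L : C ⥤ D` is a localization of a small category `C` at the class of all of its
morphisms, then `L` is both an initial functor and a final functor. -/
theorem initial_and_final_of_isLocalization_top {C : Type u} [SmallCategory C]
    {D : Type v} [Category.{w} D] (L : C ⥤ D)
    [L.IsLocalization (⊤ : MorphismProperty C)] :
    L.Initial ∧ L.Final := by
  have hop : L.op.IsLocalization (⊤ : MorphismProperty Cᵒᵖ) := by
    rw [← LocTopAux.top_op]
    infer_instance
  have hfinal := LocTopAux.final_of_isLocalization_top L
  have hfinalop := LocTopAux.final_of_isLocalization_top L.op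
  exact ⟨Functor.initial_of_final_op L, hfinal⟩
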